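/- For all positive integers m, n and all 0 < s < r there exists a constant c₀ > 0, depending only on m, n and r/s, with the following property. Let φ : B_s → ℝⁿ be a C² map with ‖φ‖_{C²} ≤ c₀ and ‖φ‖_{C⁰} ≤ c₀ r, where B_s ⊂ ℝᵐ is the closed ball of radius s centered at 0, and let f : B_r → ℝⁿ be Lipschitz with Lip(f) ≤ c₀ and ‖f‖_{C⁰} ≤ c₀ r. For p ∈ B_s set Φ(p) := (p, φ(p)) ∈ ℝ^{m+n}, let T_p := {(v, Dφ(p)·v) : v ∈ ℝᵐ} be the tangent space to the graph of φ at Φ(p), and let κ_p := T_p^⊥ be its orthogonal complement in ℝ^{m+n}. Then for every p ∈ B_s the affine subspace Φ(p) + κ_p intersects Gr(f) := {(x, f(x)) : x ∈ B_r} in exactly one point. -/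

import Mathlib

noncomputable section

/-- The point `(x, y)` of `ℝᵐ × ℝⁿ`, equipped with the Euclidean (`ℓ²`) product structure. -/
def prodPt {m n : ℕ} (x : EuclideanSpace ℝ (Fin m)) (y : EuclideanSpace ℝ (Fin n)) :
    WithLp 2 (EuclideanSpace ℝ (Fin m) × EuclideanSpace ℝ (Fin n)) :=
  (WithLp.equiv 2 _).symm (x, y)

/-- The graph `{(v, L v) : v ∈ ℝᵐ}` of a linear map `L : ℝᵐ → ℝⁿ` as a subspace of
the Euclidean product `ℝᵐ × ℝⁿ`. -/
def graphSubspace {m n : ℕ} (L : EuclideanSpace ℝ (Fin m) →L[ℝ] EuclideanSpace ℝ (Fin n)) :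
    Submodule ℝ (WithLp 2 (EuclideanSpace ℝ (Fin m) × EuclideanSpace ℝ (Fin n))) :=
  Submodule.map
    (WithLp.linearEquiv 2 ℝ (EuclideanSpace ℝ (Fin m) × EuclideanSpace ℝ (Fin n))).symm.toLinearMap
    (LinearMap.graph L.toLinearMap)

/-- Membership in the orthogonal complement of the graph of `L` is equivalent to the
normal equation `a + L† b = 0`. -/
lemma prodPt_mem_graph_orth_iff {m n : ℕ}
    (L : EuclideanSpace ℝ (Fin m) →L[ℝ] EuclideanSpace ℝ (Fin n))
    (a : EuclideanSpace ℝ (Fin m)) (b : EuclideanSpace ℝ (Fin n)) :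
    prodPt a b ∈ (graphSubspace L)ᗮ ↔ a + ContinuousLinearMap.adjoint L b = 0 := by
  have key : ∀ v : EuclideanSpace ℝ (Fin m),
      (inner ℝ ((WithLp.linearEquiv 2 ℝ _).symm (v, L v)) (prodPt a b) : ℝ)
        = inner ℝ v (a + ContinuousLinearMap.adjoint L b) := by
    intro v
    rw [WithLp.prod_inner_apply, inner_add_right, ContinuousLinearMap.adjoint_inner_right]
    rfl
  rw [Submodule.mem_orthogonal]
  constructor
  · intro h
    set u := a + ContinuousLinearMap.adjoint L b with hu
    have h2 := h ((WithLp.linearEquiv 2 ℝ _).symm (u, L u))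
      (Submodule.mem_map.mpr ⟨(u, L u), by simp [LinearMap.mem_graph_iff], rfl⟩)
    rw [key u] at h2
    exact inner_self_eq_zero.mp h2
  · intro h v hv
    obtain ⟨w, hw, rfl⟩ := Submodule.mem_map.mp hv
    simp only [SetLike.mem_coe, LinearMap.mem_graph_iff] at hw
    have : w = (w.1, L w.1) := by cases w; simp_all
    rw [this]; exact (key w.1).trans (by rw [h, inner_zero_right])

set_option maxHeartbeats 1000000 in
/-- For all positive integers `m, n` and all `0 < s < r` there exists `c₀ > 0`,
depending only on `m, n, r/s`, with the following property. Let `φ : B_s → ℝⁿ` be `C²` with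
`‖φ‖_{C²} ≤ c₀` and `‖φ‖_{C⁰} ≤ c₀ r`, and let `f : B_r → ℝⁿ` be Lipschitz with `Lip(f) ≤ c₀`
and `‖f‖_{C⁰} ≤ c₀ r`. For `p ∈ B_s` let `Φ(p) = (p, φ(p))`, `T_p = {(v, Dφ(p)·v)}` the tangent
space to the graph of `φ` at `Φ(p)`, and `κ_p = T_p^⊥`. Then for every `p ∈ B_s` the affine
subspace `Φ(p) + κ_p` meets `Gr(f) = {(x, f(x)) : x ∈ B_r}` in exactly one point. -/
theorem normal_fiber_meets_graph_once (m n : ℕ) (hm : 0 < m) (hn : 0 < n)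
    (s r : ℝ) (hs : 0 < s) (hsr : s < r) :
    ∃ c₀ : ℝ, 0 < c₀ ∧
      ∀ φ : EuclideanSpace ℝ (Fin m) → EuclideanSpace ℝ (Fin n), ContDiff ℝ 2 φ →
        (∀ x, ‖x‖ ≤ s → ‖φ x‖ + ‖fderiv ℝ φ x‖ + ‖fderiv ℝ (fderiv ℝ φ) x‖ ≤ c₀) →
        (∀ x, ‖x‖ ≤ s → ‖φ x‖ ≤ c₀ * r) →
        ∀ f : EuclideanSpace ℝ (Fin m) → EuclideanSpace ℝ (Fin n),
          (∀ x y, ‖x‖ ≤ r → ‖y‖ ≤ r → ‖f x - f y‖ ≤ c₀ * ‖x - y‖) →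
          (∀ x, ‖x‖ ≤ r → ‖f x‖ ≤ c₀ * r) →
          ∀ p : EuclideanSpace ℝ (Fin m), ‖p‖ ≤ s →
            ∃! z : WithLp 2 (EuclideanSpace ℝ (Fin m) × EuclideanSpace ℝ (Fin n)),
              (∃ x, ‖x‖ ≤ r ∧ z = prodPt x (f x)) ∧
              z - prodPt p (φ p) ∈ (graphSubspace (fderiv ℝ φ p))ᗮ := by
  have hr : 0 < r := hs.trans hsr
  have hq : 0 < (r - s) / (2 * r) := div_pos (by linarith) (by linarith)
  refine ⟨min (1/2) (Real.sqrt ((r - s) / (2 * r))), lt_min (by norm_num) (Real.sqrt_pos.mpr hq),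
    ?_⟩
  set c₀ := min (1/2 : ℝ) (Real.sqrt ((r - s) / (2 * r))) with hc₀def
  have hc₀pos : 0 < c₀ := lt_min (by norm_num) (Real.sqrt_pos.mpr hq)
  have hchalf : c₀ ≤ 1/2 := min_le_left _ _
  have hcsq : c₀ * c₀ ≤ (r - s) / (2 * r) := by
    have h1 : c₀ ≤ Real.sqrt ((r - s) / (2 * r)) := min_le_right _ _
    calc c₀ * c₀ ≤ Real.sqrt ((r - s) / (2 * r)) * Real.sqrt ((r - s) / (2 * r)) :=
          mul_le_mul h1 h1 hc₀pos.le (Real.sqrt_nonneg _)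
      _ = (r - s) / (2 * r) := Real.mul_self_sqrt hq.le
  have hc2r : 2 * (c₀ * c₀) * r ≤ r - s := by
    have := (le_div_iff₀ (by positivity)).mp hcsq
    nlinarith
  intro φ hφ hC2 hφ0 f hfl hf0 p hp
  set L := fderiv ℝ φ p with hL
  set A := ContinuousLinearMap.adjoint L with hA
  have hLn : ‖L‖ ≤ c₀ := by
    have := hC2 p hp
    have h1 := norm_nonneg (φ p)
    have h2 := norm_nonneg (fderiv ℝ (fderiv ℝ φ) p)
    linarith
  have hAn : ‖A‖ ≤ c₀ := by
    rw [hA, ContinuousLinearMap.adjoint.norm_map]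
    exact hLn
  set G : EuclideanSpace ℝ (Fin m) → EuclideanSpace ℝ (Fin m) :=
    fun x => p - A (f x - φ p) with hG
  have hpr : ‖p‖ ≤ r := hp.trans hsr.le
  have hmaps : ∀ x, ‖x‖ ≤ r → ‖G x‖ ≤ r := by
    intro x hx
    have h1 : ‖A (f x - φ p)‖ ≤ ‖A‖ * ‖f x - φ p‖ := A.le_opNorm _
    have h2 : ‖f x - φ p‖ ≤ ‖f x‖ + ‖φ p‖ := norm_sub_le _ _
    have h3 : ‖f x‖ ≤ c₀ * r := hf0 x hx
    have h4 : ‖φ p‖ ≤ c₀ * r := hφ0 p hp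
    have h5 : ‖G x‖ ≤ ‖p‖ + ‖A (f x - φ p)‖ := norm_sub_le _ _
    have h6 : ‖A‖ * ‖f x - φ p‖ ≤ c₀ * (c₀ * r + c₀ * r) :=
      mul_le_mul hAn (h2.trans (by linarith)) (norm_nonneg _) hc₀pos.le
    have h7 : c₀ * (c₀ * r + c₀ * r) = 2 * (c₀ * c₀) * r := by ring
    linarith
  have hcontr : ∀ x y, ‖x‖ ≤ r → ‖y‖ ≤ r → ‖G x - G y‖ ≤ c₀ * c₀ * ‖x - y‖ := by
    intro x y hx hy
    have heq : G x - G y = A (f y - f x) := by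
      simp only [hG, map_sub]; abel
    rw [heq]
    have h1 : ‖A (f y - f x)‖ ≤ ‖A‖ * ‖f y - f x‖ := A.le_opNorm _
    have h2 : ‖f y - f x‖ ≤ c₀ * ‖y - x‖ := hfl y x hy hx
    have h3 : ‖y - x‖ = ‖x - y‖ := norm_sub_rev _ _
    have h4 : ‖A‖ * ‖f y - f x‖ ≤ c₀ * (c₀ * ‖x - y‖) :=
      mul_le_mul hAn (h2.trans (le_of_eq (by rw [h3]))) (norm_nonneg _) hc₀pos.le
    have h5 : c₀ * (c₀ * ‖x - y‖) = c₀ * c₀ * ‖x - y‖ := by ring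
    linarith
  -- Fixed point on the closed ball
  set B : Set (EuclideanSpace ℝ (Fin m)) := Metric.closedBall 0 r with hB
  have hmemB : ∀ x : EuclideanSpace ℝ (Fin m), x ∈ B ↔ ‖x‖ ≤ r := by
    intro x; rw [hB, Metric.mem_closedBall, dist_zero_right]
  haveI : Nonempty B := ⟨⟨0, (hmemB 0).mpr (by simp [hr.le])⟩⟩
  haveI : CompleteSpace B := Metric.isClosed_closedBall.completeSpace_coe
  set g : B → B := fun x => ⟨G x, (hmemB _).mpr (hmaps x ((hmemB _).mp x.2))⟩ with hg
  have hKlt : (⟨c₀ * c₀, by positivity⟩ : NNReal) < 1 := by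
    apply NNReal.coe_lt_coe.mp
    show c₀ * c₀ < 1
    nlinarith
  have hcw : ContractingWith ⟨c₀ * c₀, by positivity⟩ g := by
    refine ⟨hKlt, LipschitzWith.of_dist_le_mul fun x y => ?_⟩
    rw [Subtype.dist_eq, Subtype.dist_eq, dist_eq_norm, dist_eq_norm]
    exact hcontr x y ((hmemB _).mp x.2) ((hmemB _).mp y.2)
  set x₀ : B := ContractingWith.fixedPoint g hcw with hx₀def
  have hfix : g x₀ = x₀ := hcw.fixedPoint_isFixedPt
  have hx₀fix : G (x₀ : EuclideanSpace ℝ (Fin m)) = x₀ := congrArg Subtype.val hfix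
  have hx₀r : ‖(x₀ : EuclideanSpace ℝ (Fin m))‖ ≤ r := (hmemB _).mp x₀.2
  -- characterization of the normal condition
  have hchar : ∀ x : EuclideanSpace ℝ (Fin m),
      (prodPt x (f x) - prodPt p (φ p) ∈ (graphSubspace L)ᗮ) ↔ x = G x := by
    intro x
    have hsub : prodPt x (f x) - prodPt p (φ p) = prodPt (x - p) (f x - φ p) := rfl
    rw [hsub, prodPt_mem_graph_orth_iff, ← hA]
    constructor
    · intro h
      simp only [hG]
      rw [← sub_eq_zero, ← h]
      abel
    · intro h
      simp only [hG] at h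
      nth_rewrite 1 [h]
      abel
  refine ⟨prodPt x₀ (f x₀), ⟨⟨x₀, hx₀r, rfl⟩, (hchar _).mpr hx₀fix.symm⟩, ?_⟩
  rintro z' ⟨⟨x, hxr, rfl⟩, horth⟩
  have hfixx : x = G x := (hchar x).mp horth
  have hxeq : x = (x₀ : EuclideanSpace ℝ (Fin m)) := by
    have h1 : ‖x - x₀‖ = ‖G x - G x₀‖ := by rw [← hfixx, hx₀fix]
    have h2 : ‖G x - G (x₀ : EuclideanSpace ℝ (Fin m))‖ ≤ c₀ * c₀ * ‖x - x₀‖ :=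
      hcontr x x₀ hxr hx₀r
    have h3 : 0 ≤ ‖x - (x₀ : EuclideanSpace ℝ (Fin m))‖ := norm_nonneg _
    have h4 : ‖x - (x₀ : EuclideanSpace ℝ (Fin m))‖ = 0 := by nlinarith
    rw [← sub_eq_zero]
    exact norm_eq_zero.mp h4
  rw [hxeq]

end
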